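/- Let (X, 𝓑) be a standard Borel space, μ a Borel probability measure on X, and S a Markov operator on L²(X, μ). Then there exist μ-relatively complete sub-σ-algebras C and D of 𝓑 such that: (1) L²(X, C, μ) = {f ∈ L²(X, μ) : (S ∘ S*) f = f}; (2) L²(X, D, μ) = {f ∈ L²(X, μ) : (S* ∘ S) f = f}; (3) E_C ∘ S = S ∘ E_D; and (4) S maps L²(X, D, μ) isometrically onto L²(X, C, μ), and the restriction of S* to L²(X, C, μ) is the inverse of this restriction of S. -/

import Mathlib

open MeasureTheory

noncomputable section

/-- `m'` is a `μ`-relatively complete sub-σ-algebra of the ambient σ-algebra `mα`. -/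
def RelComplete {X : Type*} [mα : MeasurableSpace X]
    (μ : Measure X) (m' : MeasurableSpace X) : Prop :=
  ∀ Z Z₀ : Set X, MeasurableSet[mα] Z → MeasurableSet[m'] Z₀ →
    μ (symmDiff Z Z₀) = 0 → MeasurableSet[m'] Z

/-- The constant-one function as an element of `L²` of a finite measure. -/
noncomputable def lpOne {Z : Type*} [MeasurableSpace Z] (ν : Measure Z)
    [IsFiniteMeasure ν] : Lp ℝ 2 ν :=
  Lp.const 2 ν (1 : ℝ)

/-- A Markov operator on `L²`: positivity-preserving, fixing the constants, with adjoint
fixing the constants. -/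
def IsMarkovOp {Z : Type*} [MeasurableSpace Z] (ν : Measure Z) [IsFiniteMeasure ν]
    (S : Lp ℝ 2 ν →L[ℝ] Lp ℝ 2 ν) : Prop :=
  (∀ f : Lp ℝ 2 ν, (0 : Z → ℝ) ≤ᵐ[ν] ⇑f → (0 : Z → ℝ) ≤ᵐ[ν] ⇑(S f)) ∧
    S (lpOne ν) = lpOne ν ∧
    ContinuousLinearMap.adjoint S (lpOne ν) = lpOne ν

/-- The conditional expectation `E_m` as an operator on `L²`, i.e. the orthogonal projection
onto the closed subspace `lpMeas` of (a.e.) `m`-measurable `L²` functions. -/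
noncomputable def condExpCLM {X : Type*} {m : MeasurableSpace X} [mα : MeasurableSpace X]
    (μ : Measure X) (hm : m ≤ mα) : Lp ℝ 2 μ →L[ℝ] Lp ℝ 2 μ :=
  (lpMeas ℝ ℝ m 2 μ).subtypeL.comp (condExpL2 ℝ ℝ hm)

/-- The conclusion of Statement 6, for sub-σ-algebras `mC`, `mD`. -/
def Stmt6Conclusion {X : Type*} {mC mD : MeasurableSpace X} [mα : MeasurableSpace X]
    (μ : Measure X) [IsProbabilityMeasure μ]
    (S : Lp ℝ 2 μ →L[ℝ] Lp ℝ 2 μ) (hmC : mC ≤ mα) (hmD : mD ≤ mα) : Prop :=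
  RelComplete μ mC ∧ RelComplete μ mD ∧
  (∀ f : Lp ℝ 2 μ, f ∈ lpMeas ℝ ℝ mC 2 μ ↔
    S (ContinuousLinearMap.adjoint S f) = f) ∧
  (∀ f : Lp ℝ 2 μ, f ∈ lpMeas ℝ ℝ mD 2 μ ↔
    ContinuousLinearMap.adjoint S (S f) = f) ∧
  (∀ f : Lp ℝ 2 μ, condExpCLM μ hmC (S f) = S (condExpCLM μ hmD f)) ∧
  (∀ f ∈ lpMeas ℝ ℝ mD 2 μ, S f ∈ lpMeas ℝ ℝ mC 2 μ ∧ ‖S f‖ = ‖f‖) ∧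
  (∀ g ∈ lpMeas ℝ ℝ mC 2 μ, ContinuousLinearMap.adjoint S g ∈ lpMeas ℝ ℝ mD 2 μ) ∧
  (∀ f ∈ lpMeas ℝ ℝ mD 2 μ, ContinuousLinearMap.adjoint S (S f) = f) ∧
  (∀ g ∈ lpMeas ℝ ℝ mC 2 μ, S (ContinuousLinearMap.adjoint S g) = g)

namespace Stmt6Aux

open ContinuousLinearMap
open scoped ENNReal

variable {X : Type*} [mα : MeasurableSpace X] {μ : Measure X} [IsProbabilityMeasure μ]

local notation "⟪" x ", " y "⟫" => @inner ℝ _ _ x y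

lemma lpOne_coe : ⇑(lpOne μ) =ᵐ[μ] fun _ => (1:ℝ) := Lp.coeFn_const _ _ _

lemma inner_lpOne (f : Lp ℝ 2 μ) : ⟪f, lpOne μ⟫ = ∫ x, f x ∂μ := by
  rw [MeasureTheory.L2.inner_def]
  refine integral_congr_ae ?_
  filter_upwards [lpOne_coe (μ := μ)] with x hx
  simp [hx]

omit [IsProbabilityMeasure μ] in
lemma normsq_eq (f : Lp ℝ 2 μ) : ‖f‖ ^ 2 = ∫ x, f x * f x ∂μ := by
  rw [← real_inner_self_eq_norm_sq, MeasureTheory.L2.inner_def]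
  rfl

lemma Lp.integrable' (f : Lp ℝ 2 μ) : Integrable (⇑f) μ :=
  memLp_one_iff_integrable.mp ((Lp.memLp f).mono_exponent one_le_two)

lemma Lp_eq_zero_of_nonneg_of_integral_eq_zero (f : Lp ℝ 2 μ)
    (hf : (0 : X → ℝ) ≤ᵐ[μ] ⇑f) (hint : ∫ x, f x ∂μ = 0) : f = 0 := by
  have : ⇑f =ᵐ[μ] 0 := (integral_eq_zero_iff_of_nonneg_ae hf (Lp.integrable' f)).mp hint
  exact Lp.ext (this.trans (Lp.coeFn_zero (E := ℝ) (p := 2) (μ := μ)).symm)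

variable {S T : Lp ℝ 2 μ →L[ℝ] Lp ℝ 2 μ}

lemma markov_nonneg (hS : IsMarkovOp μ S) {f : Lp ℝ 2 μ} (hf : 0 ≤ f) : 0 ≤ S f :=
  (Lp.coeFn_nonneg _).mp (hS.1 f ((Lp.coeFn_nonneg _).mpr hf))

lemma markov_mono (hS : IsMarkovOp μ S) {f g : Lp ℝ 2 μ} (h : f ≤ g) : S f ≤ S g := by
  have h0 : 0 ≤ S (g - f) := markov_nonneg hS (sub_nonneg.mpr h)
  rw [map_sub] at h0
  exact sub_nonneg.mp h0

lemma nonneg_of_forall_inner (h : Lp ℝ 2 μ)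
    (hin : ∀ g : Lp ℝ 2 μ, 0 ≤ g → 0 ≤ ⟪h, g⟫) : 0 ≤ h := by
  set n : Lp ℝ 2 μ := (-h) ⊔ 0 with hn_def
  have hn : 0 ≤ n := le_sup_right
  have hkey : ⟪h, n⟫ = -‖n‖ ^ 2 := by
    rw [MeasureTheory.L2.inner_def, normsq_eq]
    rw [← integral_neg]
    refine integral_congr_ae ?_
    filter_upwards [Lp.coeFn_sup (-h) (0 : Lp ℝ 2 μ), Lp.coeFn_neg h,
      Lp.coeFn_zero (E := ℝ) (p := 2) (μ := μ)] with x hx1 hx2 hx3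
    have hnx : n x = max (-(h x)) 0 := by
      rw [hx1, Pi.sup_apply, hx2, hx3, Pi.neg_apply, Pi.zero_apply]
    simp only [RCLike.inner_apply, starRingEnd_apply, star_trivial, hnx]
    rcases le_total (h x) 0 with hc | hc
    · rw [max_eq_left (by linarith)]; ring
    · rw [max_eq_right (by linarith)]; ring
  have h2 : 0 ≤ -‖n‖ ^ 2 := hkey ▸ hin n hn
  have h3 : n = 0 := by
    have : ‖n‖ = 0 := by nlinarith [norm_nonneg n]
    simpa using norm_eq_zero.mp this
  have : -h ≤ 0 := h3 ▸ (le_sup_left : -h ≤ n)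
  exact neg_nonpos.mp this

lemma isMarkov_adjoint (hS : IsMarkovOp μ S) : IsMarkovOp μ (adjoint S) := by
  refine ⟨?_, hS.2.2, by rw [adjoint_adjoint]; exact hS.2.1⟩
  intro f hf
  rw [Lp.coeFn_nonneg]
  refine nonneg_of_forall_inner _ fun g hg => ?_
  rw [adjoint_inner_left]
  rw [MeasureTheory.L2.inner_def]
  refine integral_nonneg_of_ae ?_
  filter_upwards [hf, hS.1 g ((Lp.coeFn_nonneg _).mpr hg)] with x h1 h2
  simpa using mul_nonneg h2 h1

lemma isMarkov_comp (hS : IsMarkovOp μ S) (hT : IsMarkovOp μ T) :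
    IsMarkovOp μ (S ∘L T) := by
  refine ⟨fun f hf => hS.1 _ (hT.1 f hf), ?_, ?_⟩
  · simp only [coe_comp', Function.comp_apply, hT.2.1, hS.2.1]
  · rw [adjoint_comp]
    simp only [coe_comp', Function.comp_apply, hS.2.2, hT.2.2]

lemma markov_norm_le_of_bounded (hS : IsMarkovOp μ S) (f : Lp ℝ 2 μ) (M : ℝ)
    (hM : ∀ᵐ x ∂μ, |f x| ≤ M) : ‖S f‖ ≤ ‖f‖ := by
  have hsq : MemLp (fun x => f x * f x) 2 μ := by
    refine MemLp.of_le_mul (c := M) (Lp.memLp f)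
      ((Lp.aestronglyMeasurable f).mul (Lp.aestronglyMeasurable f)) ?_
    filter_upwards [hM] with x hx
    simp only [norm_mul, Real.norm_eq_abs]
    exact mul_le_mul_of_nonneg_right hx (abs_nonneg _)
  set F2 : Lp ℝ 2 μ := hsq.toLp _ with hF2_def
  have hF2coe : ⇑F2 =ᵐ[μ] fun x => f x * f x := hsq.coeFn_toLp
  have hquad : ∀ t : ℝ, ∀ᵐ x ∂μ, 0 ≤ (S F2) x - 2*t*(S f) x + t^2 := by
    intro t
    have harg : (0 : X → ℝ) ≤ᵐ[μ] ⇑(F2 - (2*t) • f + (t^2) • lpOne μ) := by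
      filter_upwards [Lp.coeFn_add (F2 - (2*t)•f) ((t^2)•lpOne μ),
        Lp.coeFn_sub F2 ((2*t)•f), Lp.coeFn_smul (2*t) f,
        Lp.coeFn_smul (t^2) (lpOne μ), lpOne_coe (μ := μ), hF2coe] with x h1 h2 h3 h4 h5 h6
      show (0:ℝ) ≤ _
      rw [h1, Pi.add_apply, h2, Pi.sub_apply, h3, h4, Pi.smul_apply, Pi.smul_apply, h5, h6]
      simp only [smul_eq_mul]
      nlinarith [sq_nonneg (f x - t)]
    have h0 := hS.1 _ harg
    have hSval : S (F2 - (2*t) • f + (t^2) • lpOne μ)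
        = S F2 - (2*t) • S f + (t^2) • lpOne μ := by
      rw [map_add, map_sub, _root_.map_smul, _root_.map_smul, hS.2.1]
    rw [hSval] at h0
    filter_upwards [h0, Lp.coeFn_add (S F2 - (2*t)•S f) ((t^2)•lpOne μ),
      Lp.coeFn_sub (S F2) ((2*t)•S f), Lp.coeFn_smul (2*t) (S f),
      Lp.coeFn_smul (t^2) (lpOne μ), lpOne_coe (μ := μ)] with x h0x h1 h2 h3 h4 h5
    have := h0x
    rw [h1, Pi.add_apply, h2, Pi.sub_apply, h3, h4, Pi.smul_apply, Pi.smul_apply, h5] at this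
    simp only [smul_eq_mul, Pi.zero_apply] at this ⊢
    linarith
  have hae : ∀ᵐ x ∂μ, ∀ t : ℚ, 0 ≤ (S F2) x - 2*(t:ℝ)*(S f) x + (t:ℝ)^2 :=
    ae_all_iff.mpr fun t => hquad (t : ℝ)
  have hpt : ∀ᵐ x ∂μ, (S f) x * (S f) x ≤ (S F2) x := by
    filter_upwards [hae] with x hx
    set a := (S F2) x
    set b := (S f) x
    refine le_of_forall_pos_le_add fun ε hε => ?_
    set m := min 1 ε with hm_def
    have hm0 : 0 < m := lt_min one_pos hε
    obtain ⟨q, hq⟩ := exists_rat_near b hm0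
    have hq' := abs_lt.mp hq
    have h1 : m ≤ 1 := min_le_left _ _
    have h2 : m ≤ ε := min_le_right _ _
    nlinarith [hx q]
  have hint1 : Integrable (fun x => (S f) x * (S f) x) μ := by
    have := (Lp.memLp (S f)).integrable_sq
    simpa [pow_two] using this
  have h2 : ‖S f‖ ^ 2 ≤ ‖f‖ ^ 2 := by
    calc ‖S f‖ ^ 2 = ∫ x, (S f) x * (S f) x ∂μ := normsq_eq _
      _ ≤ ∫ x, (S F2) x ∂μ := integral_mono_ae hint1 (Lp.integrable' _) hpt
      _ = ⟪S F2, lpOne μ⟫ := (inner_lpOne _).symm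
      _ = ⟪F2, ContinuousLinearMap.adjoint S (lpOne μ)⟫ :=
        (ContinuousLinearMap.adjoint_inner_right S F2 (lpOne μ)).symm
      _ = ⟪F2, lpOne μ⟫ := by rw [hS.2.2]
      _ = ∫ x, F2 x ∂μ := inner_lpOne _
      _ = ∫ x, f x * f x ∂μ := integral_congr_ae hF2coe
      _ = ‖f‖ ^ 2 := (normsq_eq f).symm
  nlinarith [norm_nonneg (S f), norm_nonneg f]

lemma markov_norm_le (hS : IsMarkovOp μ S) (f : Lp ℝ 2 μ) : ‖S f‖ ≤ ‖f‖ := by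
  have hclosed : IsClosed {g : Lp ℝ 2 μ | ‖S g‖ ≤ ‖g‖} :=
    isClosed_le (S.continuous.norm) continuous_norm
  refine (Lp.simpleFunc.denseRange (E := ℝ) (μ := μ) (p := 2)
    ENNReal.ofNat_ne_top).induction_on f hclosed fun φ => ?_
  obtain ⟨M, hMx⟩ := (Lp.simpleFunc.toSimpleFunc φ).exists_forall_norm_le
  refine markov_norm_le_of_bounded hS _ M ?_
  filter_upwards [Lp.simpleFunc.toSimpleFunc_eq_toFun φ] with x hx
  rw [← Real.norm_eq_abs, ← hx]
  exact hMx x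
section Fix

lemma fix_abs (hT : IsMarkovOp μ T) {f : Lp ℝ 2 μ} (hf : T f = f) : T |f| = |f| := by
  have ha : f ≤ T |f| := by
    have := markov_mono hT (le_abs_self f); rwa [hf] at this
  have hb : -f ≤ T |f| := by
    have := markov_mono hT (neg_le_abs f); rwa [map_neg, hf] at this
  have h1 : |f| ≤ T |f| := abs_le'.mpr ⟨ha, hb⟩
  set g := T |f| - |f| with hg_def
  have hg0 : 0 ≤ g := sub_nonneg.mpr h1
  have hint : ∫ x, g x ∂μ = 0 := by
    rw [← inner_lpOne, hg_def, inner_sub_left]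
    have h2 : ⟪T |f|, lpOne μ⟫ = ⟪|f|, lpOne μ⟫ := by
      have h3 := (ContinuousLinearMap.adjoint_inner_right T |f| (lpOne μ)).symm
      rw [h3, hT.2.2]
    rw [h2, sub_self]
  have hgz : g = 0 :=
    Lp_eq_zero_of_nonneg_of_integral_eq_zero g ((Lp.coeFn_nonneg g).mpr hg0) hint
  exact sub_eq_zero.mp hgz

lemma fix_sup (hT : IsMarkovOp μ T) {f g : Lp ℝ 2 μ} (hf : T f = f) (hg : T g = g) :
    T (f ⊔ g) = f ⊔ g := by
  have habs : T |g - f| = |g - f| := fix_abs hT (by rw [map_sub, hf, hg])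
  rw [sup_eq_half_smul_add_add_abs_sub' ℝ f g, _root_.map_smul, map_add, map_add, hf, hg, habs]

lemma fix_inf (hT : IsMarkovOp μ T) {f g : Lp ℝ 2 μ} (hf : T f = f) (hg : T g = g) :
    T (f ⊓ g) = f ⊓ g := by
  have habs : T |g - f| = |g - f| := fix_abs hT (by rw [map_sub, hf, hg])
  rw [inf_eq_half_smul_add_sub_abs_sub' ℝ f g, _root_.map_smul, map_sub, map_add, hf, hg, habs]

end Fix

section Indicator

/-- The `L²` class of the indicator of a measurable set. -/
def indLp (Z : Set X) (hZ : MeasurableSet Z) : Lp ℝ 2 μ :=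
  indicatorConstLp 2 hZ (measure_ne_top μ Z) 1

lemma indLp_coe {Z : Set X} (hZ : MeasurableSet Z) :
    ⇑(indLp (μ := μ) Z hZ) =ᵐ[μ] Z.indicator fun _ => (1:ℝ) :=
  indicatorConstLp_coeFn

lemma indLp_congr_set {A B : Set X} (h : A = B) (hA : MeasurableSet A) (hB : MeasurableSet B) :
    indLp (μ := μ) A hA = indLp B hB := by subst h; rfl

lemma indLp_congr_ae {A B : Set X} (hA : MeasurableSet A) (hB : MeasurableSet B)
    (h : μ (symmDiff A B) = 0) : indLp (μ := μ) A hA = indLp B hB := by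
  refine Lp.ext ?_
  have hae : ∀ᵐ x ∂μ, x ∉ symmDiff A B := by
    exact measure_eq_zero_iff_ae_notMem.mp h
  filter_upwards [hae, indLp_coe (μ := μ) hA, indLp_coe (μ := μ) hB] with x hx h1 h2
  rw [h1, h2]
  rw [Set.mem_symmDiff] at hx
  push_neg at hx
  by_cases hxA : x ∈ A
  · rw [Set.indicator_of_mem hxA, Set.indicator_of_mem (hx.1 hxA)]
  · have hxB : x ∉ B := fun hB' => hxA (hx.2 hB')
    rw [Set.indicator_of_notMem hxA, Set.indicator_of_notMem hxB]

lemma indLp_empty : indLp (μ := μ) ∅ MeasurableSet.empty = 0 := by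
  refine Lp.ext ?_
  filter_upwards [indLp_coe (μ := μ) MeasurableSet.empty,
    Lp.coeFn_zero (E := ℝ) (p := 2) (μ := μ)] with x h1 h2
  rw [h1, h2]; simp

lemma indLp_compl {Z : Set X} (hZ : MeasurableSet Z) :
    indLp (μ := μ) Zᶜ hZ.compl = lpOne μ - indLp Z hZ := by
  refine Lp.ext ?_
  filter_upwards [indLp_coe (μ := μ) hZ.compl, indLp_coe (μ := μ) hZ,
    Lp.coeFn_sub (lpOne μ) (indLp Z hZ), lpOne_coe (μ := μ)] with x h1 h2 h3 h4
  rw [h1, h3, Pi.sub_apply, h2, h4]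
  by_cases hx : x ∈ Z
  · rw [Set.indicator_of_notMem (by simpa using hx), Set.indicator_of_mem hx]; norm_num
  · rw [Set.indicator_of_mem (by simpa using hx), Set.indicator_of_notMem hx]; norm_num

lemma indLp_union {A B : Set X} (hA : MeasurableSet A) (hB : MeasurableSet B) :
    indLp (μ := μ) (A ∪ B) (hA.union hB) = indLp A hA ⊔ indLp B hB := by
  refine Lp.ext ?_
  filter_upwards [indLp_coe (μ := μ) (hA.union hB), indLp_coe (μ := μ) hA,
    indLp_coe (μ := μ) hB, Lp.coeFn_sup (indLp A hA) (indLp B hB)] with x h1 h2 h3 h4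
  rw [h1, h4, Pi.sup_apply, h2, h3]
  by_cases hxA : x ∈ A <;> by_cases hxB : x ∈ B <;>
    simp [Set.indicator, hxA, hxB]

lemma indLp_diff {A B : Set X} (hA : MeasurableSet A) (hB : MeasurableSet B) (h : A ⊆ B) :
    indLp (μ := μ) B hB - indLp A hA = indLp (B \ A) (hB.diff hA) := by
  refine Lp.ext ?_
  filter_upwards [indLp_coe (μ := μ) (hB.diff hA), indLp_coe (μ := μ) hA,
    indLp_coe (μ := μ) hB, Lp.coeFn_sub (indLp B hB) (indLp A hA)] with x h1 h2 h3 h4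
  rw [h4, Pi.sub_apply, h1, h2, h3]
  by_cases hxA : x ∈ A
  · rw [Set.indicator_of_mem hxA, Set.indicator_of_mem (h hxA),
      Set.indicator_of_notMem (by simp [hxA])]
    norm_num
  · rw [Set.indicator_of_notMem hxA, sub_zero]
    by_cases hxB : x ∈ B
    · rw [Set.indicator_of_mem hxB, Set.indicator_of_mem (by exact ⟨hxB, hxA⟩)]
    · rw [Set.indicator_of_notMem hxB, Set.indicator_of_notMem (by simp [hxB])]

lemma norm_indLp {Z : Set X} (hZ : MeasurableSet Z) :
    ‖indLp (μ := μ) Z hZ‖ = (μ Z).toReal ^ (1 / (2:ℝ)) := by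
  rw [indLp, norm_indicatorConstLp (by norm_num) (by norm_num)]
  norm_num
  rfl

lemma indLp_tendsto {V : ℕ → Set X} (hV : ∀ n, MeasurableSet (V n)) (hmono : Monotone V) :
    Filter.Tendsto (fun n => indLp (μ := μ) (V n) (hV n)) Filter.atTop
      (nhds (indLp (⋃ n, V n) (MeasurableSet.iUnion hV))) := by
  set U := ⋃ n, V n with hU_def
  have hUm : MeasurableSet U := MeasurableSet.iUnion hV
  rw [tendsto_iff_norm_sub_tendsto_zero]
  have hnorm : ∀ n, ‖indLp (μ := μ) (V n) (hV n) - indLp U hUm‖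
      = (μ (U \ V n)).toReal ^ (1 / (2:ℝ)) := by
    intro n
    rw [norm_sub_rev, indLp_diff (hV n) hUm (Set.subset_iUnion V n), norm_indLp]
  refine Filter.Tendsto.congr (fun n => (hnorm n).symm) ?_
  have h1 : Filter.Tendsto (fun n => μ (V n)) Filter.atTop (nhds (μ U)) :=
    tendsto_measure_iUnion_atTop hmono
  have h2 : Filter.Tendsto (fun n => μ (U \ V n)) Filter.atTop (nhds 0) := by
    have hdiff : ∀ n, μ (U \ V n) = μ U - μ (V n) := fun n =>
      measure_diff (Set.subset_iUnion V n) (hV n).nullMeasurableSet (measure_ne_top μ _)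
    simp only [hdiff]
    have := ENNReal.Tendsto.sub (tendsto_const_nhds : Filter.Tendsto _ Filter.atTop (nhds (μ U))) h1
      (Or.inl (measure_ne_top μ U))
    simpa using this
  have h3 : Filter.Tendsto (fun n => (μ (U \ V n)).toReal) Filter.atTop (nhds 0) := by
    have := (ENNReal.tendsto_toReal (a := 0) (by simp)).comp h2
    simpa [Function.comp_def] using this
  have h4 := h3.rpow_const (p := 1 / (2:ℝ)) (Or.inr (by norm_num))
  rw [Real.zero_rpow (by norm_num)] at h4
  exact h4

end Indicator
section Alg

/-- The sub-σ-algebra of measurable sets whose indicator is fixed by `T`. -/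
def fixAlg (T : Lp ℝ 2 μ →L[ℝ] Lp ℝ 2 μ) (hT : IsMarkovOp μ T) : MeasurableSpace X where
  MeasurableSet' Z := ∃ hZ : MeasurableSet[mα] Z, T (indLp Z hZ) = indLp Z hZ
  measurableSet_empty := ⟨MeasurableSet.empty, by rw [indLp_empty, map_zero]⟩
  measurableSet_compl := fun Z hZ => by
    obtain ⟨hZm, hfix⟩ := hZ
    exact ⟨hZm.compl, by rw [indLp_compl, map_sub, hT.2.1, hfix]⟩
  measurableSet_iUnion := fun Zs hZs => by
    choose hmeas hfix using hZs
    refine ⟨MeasurableSet.iUnion hmeas, ?_⟩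
    have hacc_meas : ∀ n, MeasurableSet (Set.accumulate Zs n) := fun n =>
      MeasurableSet.biUnion (Set.to_countable _) fun i _ => hmeas i
    have hacc_fix : ∀ n,
        T (indLp (Set.accumulate Zs n) (hacc_meas n)) = indLp _ (hacc_meas n) := by
      intro n
      induction n with
      | zero =>
        have hset : Set.accumulate Zs 0 = Zs 0 := by
          ext z; simp [Set.accumulate_def, Nat.le_zero]
        rw [indLp_congr_set hset (hacc_meas 0) (hmeas 0)]
        exact hfix 0
      | succ n ih =>
        have hset : Set.accumulate Zs (n+1) = Set.accumulate Zs n ∪ Zs (n+1) := by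
          ext z
          simp only [Set.mem_accumulate, Set.mem_union, Nat.le_add_one_iff]
          constructor
          · rintro ⟨y, hy | hy, hz⟩
            · exact Or.inl ⟨y, hy, hz⟩
            · exact Or.inr (hy ▸ hz)
          · rintro (⟨y, hy, hz⟩ | hz)
            · exact ⟨y, Or.inl hy, hz⟩
            · exact ⟨n + 1, Or.inr rfl, hz⟩
        rw [indLp_congr_set hset (hacc_meas (n+1)) ((hacc_meas n).union (hmeas (n+1))),
          indLp_union (hacc_meas n) (hmeas (n+1))]
        exact fix_sup hT ih (hfix (n+1))
    have htend := indLp_tendsto (μ := μ) hacc_meas Set.monotone_accumulate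
    have hUeq : ⋃ n, Set.accumulate Zs n = ⋃ n, Zs n := Set.iUnion_accumulate
    have hclosed : IsClosed {f : Lp ℝ 2 μ | T f = f} :=
      isClosed_eq T.continuous continuous_id
    have hmem := hclosed.mem_of_tendsto htend
      (Filter.Eventually.of_forall fun n => hacc_fix n)
    rwa [indLp_congr_set hUeq (MeasurableSet.iUnion hacc_meas)
      (MeasurableSet.iUnion hmeas)] at hmem

lemma fixAlg_le (hT : IsMarkovOp μ T) : fixAlg T hT ≤ mα := fun _Z hZ => hZ.choose

lemma fixAlg_relComplete (hT : IsMarkovOp μ T) : RelComplete μ (fixAlg T hT) := by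
  intro Z Z₀ hZ hZ₀ hsym
  obtain ⟨hZ₀m, hfix⟩ := hZ₀
  refine ⟨hZ, ?_⟩
  rw [indLp_congr_ae hZ hZ₀m hsym]
  exact hfix

lemma mem_lpMeas_of_fix (hT : IsMarkovOp μ T) {f : Lp ℝ 2 μ} (hf : T f = f) :
    f ∈ lpMeas ℝ ℝ (fixAlg T hT) 2 μ := by
  set g : X → ℝ := (Lp.aestronglyMeasurable f).mk _ with hg_def
  have hgm : Measurable g := (Lp.aestronglyMeasurable f).stronglyMeasurable_mk.measurable
  have hfg : ⇑f =ᵐ[μ] g := (Lp.aestronglyMeasurable f).ae_eq_mk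
  have key : ∀ c : ℝ, MeasurableSet[fixAlg T hT] (g ⁻¹' Set.Ioi c) := by
    intro c
    have hA : MeasurableSet (g ⁻¹' Set.Ioi c) := hgm measurableSet_Ioi
    refine ⟨hA, ?_⟩
    -- the truncations ψ n = ((n • (f - c•1)) ⊓ 1) ⊔ 0
    set ψ : ℕ → Lp ℝ 2 μ := fun n => (((n : ℝ) • (f - c • lpOne μ)) ⊓ lpOne μ) ⊔ 0 with hψ_def
    have hψfix : ∀ n, T (ψ n) = ψ n := by
      intro n
      have h1 : T ((n : ℝ) • (f - c • lpOne μ)) = (n : ℝ) • (f - c • lpOne μ) := by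
        rw [_root_.map_smul, map_sub, _root_.map_smul, hf, hT.2.1]
      exact fix_sup hT (fix_inf hT h1 hT.2.1) (map_zero T)
    -- a.e. description of ψ n
    have hψcoe : ∀ n, ⇑(ψ n) =ᵐ[μ]
        fun x => max (min ((n : ℝ) * (g x - c)) 1) 0 := by
      intro n
      filter_upwards [Lp.coeFn_sup (((n : ℝ) • (f - c • lpOne μ)) ⊓ lpOne μ) (0 : Lp ℝ 2 μ),
        Lp.coeFn_inf ((n : ℝ) • (f - c • lpOne μ)) (lpOne μ),
        Lp.coeFn_smul (n : ℝ) (f - c • lpOne μ), Lp.coeFn_sub f (c • lpOne μ),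
        Lp.coeFn_smul c (lpOne μ), lpOne_coe (μ := μ),
        Lp.coeFn_zero (E := ℝ) (p := 2) (μ := μ), hfg] with x h1 h2 h3 h4 h5 h6 h7 h8
      rw [h1, Pi.sup_apply, h2, Pi.inf_apply, h3, Pi.smul_apply, h4, Pi.sub_apply, h5,
        Pi.smul_apply, h6, h7, Pi.zero_apply, h8]
      simp only [smul_eq_mul, mul_one]
    set χ : Lp ℝ 2 μ := indLp (g ⁻¹' Set.Ioi c) hA with hχ_def
    have hψtend : Filter.Tendsto (fun n => ψ n) Filter.atTop (nhds χ) := by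
      rw [tendsto_iff_norm_sub_tendsto_zero]
      have hsq : ∀ n, ‖ψ n - χ‖ ^ 2 = ∫ x, (ψ n - χ) x * (ψ n - χ) x ∂μ :=
        fun n => normsq_eq _
      -- dominated convergence for the squares
      have hdom : Filter.Tendsto (fun n => ∫ x, (ψ n - χ) x * (ψ n - χ) x ∂μ)
          Filter.atTop (nhds 0) := by
        have hmeas' : ∀ n : ℕ, AEStronglyMeasurable
            (fun x => (ψ n - χ) x * (ψ n - χ) x) μ :=
          fun n => (Lp.aestronglyMeasurable (ψ n - χ)).mul (Lp.aestronglyMeasurable (ψ n - χ))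
        have hbound : ∀ n : ℕ, ∀ᵐ x ∂μ,
            ‖(ψ n - χ) x * (ψ n - χ) x‖ ≤ (fun _ => (4:ℝ)) x := by
          intro n
          filter_upwards [Lp.coeFn_sub (ψ n) χ, hψcoe n, indLp_coe (μ := μ) hA]
            with x h1 h2 h3
          rw [h1, Pi.sub_apply, h2, h3]
          have hb1 : |max (min ((n : ℝ) * (g x - c)) 1) 0| ≤ 1 := by
            rw [abs_le]
            constructor
            · exact le_trans (by norm_num) (le_max_right _ _)
            · exact max_le (min_le_right _ _) (by norm_num)
          have hb2 : |Set.indicator (g ⁻¹' Set.Ioi c) (fun _ => (1:ℝ)) x| ≤ 1 := by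
            by_cases hx : x ∈ g ⁻¹' Set.Ioi c <;> simp [hx]
          rw [Real.norm_eq_abs, abs_mul]
          have hd : |max (min ((n : ℝ) * (g x - c)) 1) 0 -
              Set.indicator (g ⁻¹' Set.Ioi c) (fun _ => (1:ℝ)) x| ≤ 2 :=
            (abs_sub _ _).trans (by linarith)
          calc |max (min ((n : ℝ) * (g x - c)) 1) 0 -
                Set.indicator (g ⁻¹' Set.Ioi c) (fun _ => (1:ℝ)) x| *
              |max (min ((n : ℝ) * (g x - c)) 1) 0 -
                Set.indicator (g ⁻¹' Set.Ioi c) (fun _ => (1:ℝ)) x|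
              ≤ 2 * 2 := mul_le_mul hd hd (abs_nonneg _) (by norm_num)
            _ = 4 := by norm_num
        have hlim : ∀ᵐ x ∂μ, Filter.Tendsto
            (fun n => (ψ n - χ) x * (ψ n - χ) x) Filter.atTop (nhds 0) := by
          have hco : ∀ᵐ x ∂μ, ∀ n, (ψ n - χ) x
              = max (min ((n : ℝ) * (g x - c)) 1) 0
                - Set.indicator (g ⁻¹' Set.Ioi c) (fun _ => (1:ℝ)) x := by
            rw [ae_all_iff]
            intro n
            filter_upwards [Lp.coeFn_sub (ψ n) χ, hψcoe n, indLp_coe (μ := μ) hA]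
              with x h1 h2 h3
            rw [h1, Pi.sub_apply, h2, h3]
          filter_upwards [hco] with x hx
          have hconv : Filter.Tendsto (fun n => (ψ n - χ) x) Filter.atTop (nhds 0) := by
            simp only [hx]
            by_cases hmem : x ∈ g ⁻¹' Set.Ioi c
            · have hgc : 0 < g x - c := by simpa [Set.mem_Ioi, sub_pos] using hmem
              have hev : ∀ᶠ n : ℕ in Filter.atTop,
                  max (min ((n : ℝ) * (g x - c)) 1) 0
                    - Set.indicator (g ⁻¹' Set.Ioi c) (fun _ => (1:ℝ)) x = 0 := by
                obtain ⟨N, hN⟩ := exists_nat_ge (1 / (g x - c))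
                refine Filter.eventually_atTop.mpr ⟨N, fun n hn => ?_⟩
                have h1n : (1:ℝ) ≤ (n : ℝ) * (g x - c) := by
                  rw [div_le_iff₀ hgc] at hN
                  calc (1:ℝ) ≤ (N : ℝ) * (g x - c) := hN
                    _ ≤ (n : ℝ) * (g x - c) := by
                      exact mul_le_mul_of_nonneg_right (Nat.cast_le.mpr hn) hgc.le
                rw [min_eq_right h1n, max_eq_left (by norm_num), Set.indicator_of_mem hmem]
                norm_num
              exact Filter.Tendsto.congr' (Filter.EventuallyEq.symm hev) tendsto_const_nhds
            · have hgc : g x - c ≤ 0 := by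
                simp only [Set.mem_preimage, Set.mem_Ioi, not_lt] at hmem
                linarith
              have hev : ∀ n : ℕ, max (min ((n : ℝ) * (g x - c)) 1) 0
                  - Set.indicator (g ⁻¹' Set.Ioi c) (fun _ => (1:ℝ)) x = 0 := by
                intro n
                have h1n : (n : ℝ) * (g x - c) ≤ 0 :=
                  mul_nonpos_of_nonneg_of_nonpos (Nat.cast_nonneg n) hgc
                rw [Set.indicator_of_notMem hmem,
                  max_eq_right (min_le_iff.mpr (Or.inl h1n))]
                norm_num
              have heq : (fun n : ℕ => max (min ((n : ℝ) * (g x - c)) 1) 0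
                  - Set.indicator (g ⁻¹' Set.Ioi c) (fun _ => (1:ℝ)) x) = fun _ => (0:ℝ) :=
                funext hev
              rw [heq]
              exact tendsto_const_nhds
          simpa using hconv.mul hconv
        have := tendsto_integral_of_dominated_convergence (fun _ => (4:ℝ)) hmeas'
          (integrable_const 4) hbound (by simpa using hlim)
        simpa using this
      -- conclude norm → 0
      have h5 : Filter.Tendsto (fun n => Real.sqrt (∫ x, (ψ n - χ) x * (ψ n - χ) x ∂μ))
          Filter.atTop (nhds 0) := by
        have := (Real.continuous_sqrt.tendsto 0).comp hdom
        simpa [Real.sqrt_zero, Function.comp_def] using this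
      refine h5.congr fun n => ?_
      rw [← hsq n, Real.sqrt_sq (norm_nonneg _)]
    have hclosed : IsClosed {h : Lp ℝ 2 μ | T h = h} :=
      isClosed_eq T.continuous continuous_id
    exact hclosed.mem_of_tendsto hψtend (Filter.Eventually.of_forall hψfix)
  have hgm' : Measurable[fixAlg T hT] g := measurable_of_Ioi (mδ := fixAlg T hT) key
  exact mem_lpMeas_iff_aestronglyMeasurable.mpr ⟨g, hgm'.stronglyMeasurable, hfg⟩

lemma fix_of_mem_lpMeas (hT : IsMarkovOp μ T) {f : Lp ℝ 2 μ}
    (hf : f ∈ lpMeas ℝ ℝ (fixAlg T hT) 2 μ) : T f = f := by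
  have hm : fixAlg T hT ≤ mα := fixAlg_le hT
  have hind : ∀ (s : Set X) (hs : MeasurableSet[fixAlg T hT] s),
      T (indLp s (hm s hs)) = indLp s (hm s hs) := by
    intro s hs
    obtain ⟨hsm, hfix⟩ := hs
    exact hfix
  set Φ : Lp ℝ 2 (μ.trim hm) →L[ℝ] Lp ℝ 2 μ :=
    (lpMeas ℝ ℝ (fixAlg T hT) 2 μ).subtypeL.comp
      ((lpMeasToLpTrimLie ℝ ℝ 2 μ hm).symm.toLinearIsometry.toContinuousLinearMap) with hΦ_def
  have hΦ_apply : ∀ y : Lp ℝ 2 (μ.trim hm),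
      Φ y = ((lpMeasToLpTrimLie ℝ ℝ 2 μ hm).symm y : Lp ℝ 2 μ) := fun y => rfl
  have hP : ∀ h : Lp ℝ 2 (μ.trim hm), T (Φ h) = Φ h := by
    refine @Lp.induction X ℝ (fixAlg T hT) _ 2 (μ.trim hm) ⟨one_le_two⟩
      ENNReal.ofNat_ne_top (fun h => T (Φ h) = Φ h) ?_ ?_ ?_
    · intro c s hs hμs
      suffices hgoal : T (Φ (indicatorConstLp 2 hs hμs.ne c))
          = Φ (indicatorConstLp 2 hs hμs.ne c) by exact hgoal
      rw [hΦ_apply, lpMeasToLpTrimLie_symm_indicator hs hμs.ne c]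
      have hind_smul : indicatorConstLp 2 (hm s hs) ((le_trim hm).trans_lt hμs).ne c
          = c • indLp s (hm s hs) := by
        refine Lp.ext ?_
        filter_upwards [indicatorConstLp_coeFn (μ := μ) (p := 2)
          (hs := hm s hs) (hμs := ((le_trim hm).trans_lt hμs).ne) (c := c),
          Lp.coeFn_smul c (indLp (μ := μ) s (hm s hs)), indLp_coe (μ := μ) (hm s hs)]
          with x h1 h2 h3
        rw [h1, h2, Pi.smul_apply, h3, smul_eq_mul]
        by_cases hx : x ∈ s <;> simp [hx]
      rw [hind_smul, _root_.map_smul, hind s hs]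
    · intro h1 h2 _ _ _ hP1 hP2
      rw [map_add, map_add, hP1, hP2]
    · exact isClosed_eq (T.continuous.comp Φ.continuous) Φ.continuous
  have hfeq : Φ ((lpMeasToLpTrimLie ℝ ℝ 2 μ hm) ⟨f, hf⟩) = f := by
    rw [hΦ_apply, LinearIsometryEquiv.symm_apply_apply]
  have := hP ((lpMeasToLpTrimLie ℝ ℝ 2 μ hm) ⟨f, hf⟩)
  rwa [hfeq] at this

end Alg

section Main

variable (S : Lp ℝ 2 μ →L[ℝ] Lp ℝ 2 μ)

set_option maxHeartbeats 2000000 in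
lemma main (hS : IsMarkovOp μ S) :
    ∃ (mC mD : MeasurableSpace X) (hmC : mC ≤ mα) (hmD : mD ≤ mα),
      Stmt6Conclusion (mα := mα) μ S hmC hmD := by
  have hS' : IsMarkovOp μ (adjoint S) := isMarkov_adjoint hS
  have hTC : IsMarkovOp μ (S ∘L adjoint S) := isMarkov_comp hS hS'
  have hTD : IsMarkovOp μ (adjoint S ∘L S) := isMarkov_comp hS' hS
  have hnS : ∀ f : Lp ℝ 2 μ, ‖S f‖ ≤ ‖f‖ := markov_norm_le hS
  have hnS' : ∀ f : Lp ℝ 2 μ, ‖adjoint S f‖ ≤ ‖f‖ := markov_norm_le hS'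
  have hiffC : ∀ f : Lp ℝ 2 μ,
      f ∈ lpMeas ℝ ℝ (fixAlg (S ∘L adjoint S) hTC) 2 μ ↔ S (adjoint S f) = f := fun f =>
    ⟨fun h => fix_of_mem_lpMeas hTC h, fun h => mem_lpMeas_of_fix hTC h⟩
  have hiffD : ∀ f : Lp ℝ 2 μ,
      f ∈ lpMeas ℝ ℝ (fixAlg (adjoint S ∘L S) hTD) 2 μ ↔ adjoint S (S f) = f := fun f =>
    ⟨fun h => fix_of_mem_lpMeas hTD h, fun h => mem_lpMeas_of_fix hTD h⟩
  have hadj_mem : ∀ g ∈ lpMeas ℝ ℝ (fixAlg (S ∘L adjoint S) hTC) 2 μ,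
      adjoint S g ∈ lpMeas ℝ ℝ (fixAlg (adjoint S ∘L S) hTD) 2 μ := by
    intro g hg
    refine (hiffD _).mpr ?_
    rw [(hiffC g).mp hg]
  have hiso : ∀ f ∈ lpMeas ℝ ℝ (fixAlg (adjoint S ∘L S) hTD) 2 μ,
      S f ∈ lpMeas ℝ ℝ (fixAlg (S ∘L adjoint S) hTC) 2 μ ∧ ‖S f‖ = ‖f‖ := by
    intro f hf
    have h1 : adjoint S (S f) = f := (hiffD f).mp hf
    refine ⟨(hiffC (S f)).mpr (by rw [h1]), le_antisymm (hnS f) ?_⟩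
    calc ‖f‖ = ‖adjoint S (S f)‖ := by rw [h1]
      _ ≤ ‖S f‖ := hnS' _
  have hcond : ∀ f : Lp ℝ 2 μ,
      condExpCLM μ (fixAlg_le hTC) (S f) = S (condExpCLM μ (fixAlg_le hTD) f) := by
    intro f
    haveI hFC : Fact ((fixAlg (S ∘L adjoint S) hTC) ≤ mα) := ⟨fixAlg_le hTC⟩
    haveI hFD : Fact ((fixAlg (adjoint S ∘L S) hTD) ≤ mα) := ⟨fixAlg_le hTD⟩
    set q : Lp ℝ 2 μ := condExpCLM μ (fixAlg_le hTD) f with hq_def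
    have hq_mem : q ∈ lpMeas ℝ ℝ (fixAlg (adjoint S ∘L S) hTD) 2 μ :=
      (condExpL2 ℝ ℝ (fixAlg_le hTD) f).2
    have hq_fix : adjoint S (S q) = q := (hiffD q).mp hq_mem
    have hSq_mem : S q ∈ lpMeas ℝ ℝ (fixAlg (S ∘L adjoint S) hTC) 2 μ :=
      (hiffC (S q)).mpr (by rw [hq_fix])
    have hproj : ((lpMeas ℝ ℝ (fixAlg (S ∘L adjoint S) hTC) 2 μ).starProjection (S f)
        : Lp ℝ 2 μ) = S q := by
      refine Submodule.eq_starProjection_of_mem_of_inner_eq_zero hSq_mem ?_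
      intro w hw
      have hw' : adjoint S w ∈ lpMeas ℝ ℝ (fixAlg (adjoint S ∘L S) hTD) 2 μ := hadj_mem w hw
      have horth := Submodule.starProjection_inner_eq_zero f (adjoint S w) hw'
      calc ⟪S f - S q, w⟫ = ⟪S (f - q), w⟫ := by rw [map_sub]
        _ = ⟪f - q, adjoint S w⟫ := (adjoint_inner_right S (f - q) w).symm
        _ = 0 := horth
    exact hproj
  exact ⟨fixAlg (S ∘L adjoint S) hTC, fixAlg (adjoint S ∘L S) hTD,
    fixAlg_le hTC, fixAlg_le hTD,
    fixAlg_relComplete hTC, fixAlg_relComplete hTD,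
    hiffC, hiffD, hcond, hiso, hadj_mem,
    fun f hf => (hiffD f).mp hf, fun g hg => (hiffC g).mp hg⟩

end Main

end Stmt6Aux

/-- For a Markov operator `S` on `L²(X, μ)` there are `μ`-relatively complete
sub-σ-algebras `C`, `D` such that `L²(C)` is the fixed space of `S ∘ S*`, `L²(D)` is the fixed
space of `S* ∘ S`, `E_C ∘ S = S ∘ E_D`, and `S` maps `L²(D)` isometrically onto `L²(C)` with
inverse (the restriction of) `S*`. -/
theorem stmt6 {X : Type*} [mα : MeasurableSpace X] [StandardBorelSpace X]
    (μ : Measure X) [IsProbabilityMeasure μ]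
    (S : Lp ℝ 2 μ →L[ℝ] Lp ℝ 2 μ) (hS : IsMarkovOp μ S) :
    ∃ (mC mD : MeasurableSpace X) (hmC : mC ≤ mα) (hmD : mD ≤ mα),
      Stmt6Conclusion (mα := mα) μ S hmC hmD :=
  Stmt6Aux.main S hS
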